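/- Let v ≥ 5 and let G be a strictly 2-minor-balanced graph on v vertices (meaning ρ_2(G) > 0 and ρ_2(G) > ρ_2(H) for every proper minor H of G, where ρ_2(K) = (e(K)-1)/(v(K)-2) when e(K) ≥ 2). Then G is 3-connected. -/

import Mathlib

/-- `H` is a minor of `G` (branch set definition). -/
def SimpleGraph.IsMinor {W V : Type*} (H : SimpleGraph W) (G : SimpleGraph V) : Prop :=
  ∃ f : W → Set V,
    (∀ w, (G.induce (f w)).Connected) ∧
    (Pairwise fun w₁ w₂ => Disjoint (f w₁) (f w₂)) ∧
    (∀ ⦃w₁ w₂⦄, H.Adj w₁ w₂ → ∃ a ∈ f w₁, ∃ b ∈ f w₂, G.Adj a b)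

def SimpleGraph.IsProperMinor {W V : Type*} (H : SimpleGraph W) (G : SimpleGraph V) : Prop :=
  H.IsMinor G ∧ IsEmpty (H ≃g G)

/-- `ρ₂(G) = (e-1)/(v-2)` when `e ≥ 2`, and `0` otherwise. -/
noncomputable def SimpleGraph.rho2 {V : Type*} (G : SimpleGraph V) : ℝ :=
  if 2 ≤ Nat.card G.edgeSet then
    ((Nat.card G.edgeSet : ℝ) - 1) / ((Nat.card V : ℝ) - 2)
  else 0

namespace Stmt15Aux
open SimpleGraph Set

section Aux
variable {V : Type*}

lemma rho2_congr {α β : Type*} {H : SimpleGraph α} {H' : SimpleGraph β} (φ : H ≃g H') :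
    H.rho2 = H'.rho2 := by
  have h1 : Nat.card H.edgeSet = Nat.card H'.edgeSet :=
    Nat.card_eq_of_bijective _ φ.mapEdgeSet.bijective
  have h2 : Nat.card α = Nat.card β := Nat.card_eq_of_bijective _ φ.toEquiv.bijective
  simp only [SimpleGraph.rho2, h1, h2]

lemma isMinor_of_iso {α β γ : Type*} {H : SimpleGraph α} {H' : SimpleGraph β} {G : SimpleGraph γ}
    (φ : H' ≃g H) (hm : H.IsMinor G) : H'.IsMinor G := by
  obtain ⟨f, hconn, hdisj, hadj⟩ := hm
  refine ⟨f ∘ φ, fun w => hconn _, ?_, ?_⟩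
  · intro a b hab
    exact hdisj (fun h => hab (φ.toEquiv.injective h))
  · intro a b hab
    exact hadj (φ.map_adj_iff.mpr hab)

/-- edges of `G` with both endpoints in `t` -/
def edgesIn (G : SimpleGraph V) (t : Set V) : Set (Sym2 V) := {e ∈ G.edgeSet | ∀ x ∈ e, x ∈ t}

lemma mem_edgesIn {G : SimpleGraph V} {t : Set V} {u w : V} :
    s(u, w) ∈ edgesIn G t ↔ G.Adj u w ∧ u ∈ t ∧ w ∈ t := by
  simp only [edgesIn, Set.mem_setOf_eq, SimpleGraph.mem_edgeSet, Sym2.mem_iff]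
  constructor
  · rintro ⟨ha, h⟩
    exact ⟨ha, h u (Or.inl rfl), h w (Or.inr rfl)⟩
  · rintro ⟨ha, hu, hw⟩
    refine ⟨ha, ?_⟩
    rintro x (rfl | rfl) <;> assumption

lemma card_edgeSet_induce (G : SimpleGraph V) (t : Set V) :
    Nat.card (G.induce t).edgeSet = (edgesIn G t).ncard := by
  rw [← Nat.card_coe_set_eq]
  apply Nat.card_eq_of_bijective (fun e => ⟨Sym2.map Subtype.val e.1, by
    obtain ⟨e, he⟩ := e
    induction e with
    | _ a b =>
      refine ⟨he, ?_⟩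
      intro x hx
      simp only [Sym2.map_pair_eq, Sym2.mem_iff] at hx
      rcases hx with rfl | rfl
      exacts [a.2, b.2]⟩)
  constructor
  · rintro ⟨e1, he1⟩ ⟨e2, he2⟩ h
    simp only [Subtype.mk_eq_mk] at h ⊢
    exact Sym2.map.injective Subtype.val_injective h
  · rintro ⟨e, he, hin⟩
    induction e with
    | _ a b =>
      have ha : a ∈ t := hin a (by simp)
      have hb : b ∈ t := hin b (by simp)
      exact ⟨⟨s(⟨a, ha⟩, ⟨b, hb⟩), he⟩, rfl⟩

lemma induce_singleton_connected (G : SimpleGraph V) (v : V) : (G.induce {v}).Connected := by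
  have : Nonempty ({v} : Set V) := ⟨⟨v, rfl⟩⟩
  refine ⟨fun a b => ?_⟩
  have : a = b := Subtype.ext (a.2.trans b.2.symm)
  exact this ▸ Reachable.refl _

lemma isMinor_induce (G : SimpleGraph V) (t : Set V) : (G.induce t).IsMinor G := by
  refine ⟨fun w => {(w : V)}, fun w => induce_singleton_connected G w, ?_, ?_⟩
  · intro a b hab
    simp only [Set.disjoint_singleton_left, Set.mem_singleton_iff]
    exact fun h => hab (Subtype.ext h)
  · intro a b hab
    exact ⟨a, rfl, b, rfl, hab⟩

lemma card_edgeSet_sup_edge [Finite V] (H : SimpleGraph V) {x y : V} (hne : x ≠ y)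
    (hnadj : ¬ H.Adj x y) :
    Nat.card (H ⊔ SimpleGraph.edge x y).edgeSet = Nat.card H.edgeSet + 1 := by
  rw [Nat.card_coe_set_eq, Nat.card_coe_set_eq, edgeSet_sup, edge_edgeSet_of_ne hne,
    Set.union_singleton, Set.ncard_insert_of_notMem (by simpa using hnadj) (Set.toFinite _)]

lemma card_edgeSet_le_choose [Finite V] (H : SimpleGraph V) :
    Nat.card H.edgeSet ≤ (Nat.card V).choose 2 := by
  classical
  cases nonempty_fintype V
  letI : Fintype H.edgeSet := Fintype.ofFinite _
  have := H.card_edgeFinset_le_card_choose_two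
  rwa [Nat.card_eq_fintype_card, Nat.card_eq_fintype_card, ← SimpleGraph.edgeFinset_card]

lemma exists_iso_fin {α : Type*} [Finite α] (H : SimpleGraph α) :
    ∃ H' : SimpleGraph (Fin (Nat.card α)), Nonempty (H' ≃g H) := by
  let e : Fin (Nat.card α) ≃ α := (Finite.equivFin α).symm
  exact ⟨H.comap e.toEmbedding, ⟨SimpleGraph.Iso.comap e H⟩⟩

lemma isMinor_induce_sup_edge (G : SimpleGraph V) {t B : Set V} {x y : V}
    (hx : x ∈ t) (hy : y ∈ t) (hxy : x ≠ y) (hdisj : Disjoint t B)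
    (hconnB : (G.induce (insert y B)).Connected)
    (hxB : ∃ b ∈ insert y B, G.Adj x b) :
    ((G.induce t) ⊔ SimpleGraph.edge (⟨x, hx⟩ : t) (⟨y, hy⟩ : t)).IsMinor G := by
  classical
  refine ⟨fun w => if (w : V) = y then insert y B else {(w : V)}, ?_, ?_, ?_⟩
  · intro w
    dsimp only
    by_cases h : (w : V) = y
    · rw [if_pos h]; exact hconnB
    · rw [if_neg h]; exact induce_singleton_connected G (w : V)
  · intro w₁ w₂ hne12
    have key : ∀ w : t, (w : V) ≠ y → (w : V) ∉ insert y B := by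
      intro w hwne
      simp only [Set.mem_insert_iff]
      rintro (h | h)
      · exact hwne h
      · exact Set.disjoint_left.mp hdisj w.2 h
    by_cases h1 : (w₁ : V) = y <;> by_cases h2 : (w₂ : V) = y
    · exact absurd (Subtype.ext (h1.trans h2.symm)) hne12
    · simp only [h1, h2, if_true, if_false]
      exact (Set.disjoint_singleton_right).mpr (key w₂ h2)
    · simp only [h1, h2, if_true, if_false]
      exact (Set.disjoint_singleton_left).mpr (key w₁ h1)
    · simp only [h1, h2, if_false, Set.disjoint_singleton_left, Set.mem_singleton_iff]
      exact fun h => hne12 (Subtype.ext h)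
  · intro w₁ w₂ hadj
    have hmem : ∀ w : t, (w : V) ∈ (if (w : V) = y then (insert y B : Set V) else {(w : V)}) := by
      intro w
      by_cases h : (w : V) = y <;> simp [h]
    rcases hadj with hadj | hadj
    · exact ⟨w₁, hmem w₁, w₂, hmem w₂, hadj⟩
    · rw [SimpleGraph.edge_adj] at hadj
      obtain ⟨⟨rfl, rfl⟩ | ⟨rfl, rfl⟩, -⟩ := hadj
      · obtain ⟨b, hb, hadjb⟩ := hxB
        exact ⟨x, by simp [hxy], b, by simp [hb], hadjb⟩
      · obtain ⟨b, hb, hadjb⟩ := hxB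
        exact ⟨b, by simp [hb], x, by simp [hxy], hadjb.symm⟩

end Aux

section Main
variable {n : ℕ} {G : SimpleGraph (Fin n)}

lemma e_two (hpos : 0 < G.rho2) : 2 ≤ Nat.card G.edgeSet := by
  by_contra h
  rw [SimpleGraph.rho2, if_neg h] at hpos
  exact lt_irrefl _ hpos

lemma rho_mul (hn : 5 ≤ n) (hpos : 0 < G.rho2) :
    G.rho2 * ((n : ℝ) - 2) = (Nat.card G.edgeSet : ℝ) - 1 := by
  have h5 : (5:ℝ) ≤ (n:ℝ) := by exact_mod_cast hn
  rw [SimpleGraph.rho2, if_pos (e_two hpos), show ((Nat.card (Fin n) : ℝ)) = (n:ℝ) by simp]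
  rw [div_mul_cancel₀]
  intro h
  linarith

lemma piece_le (hpos : 0 < G.rho2)
    (hbal : ∀ (j : ℕ) (H : SimpleGraph (Fin j)), H.IsProperMinor G → H.rho2 < G.rho2)
    {t : Set (Fin n)} (htn : t.ncard < n) (ht2 : 2 ≤ t.ncard)
    {P : SimpleGraph ↥t} (hm : P.IsMinor G) :
    (Nat.card P.edgeSet : ℝ) - 1 ≤ G.rho2 * ((t.ncard : ℝ) - 2) ∧
      (3 ≤ t.ncard → (Nat.card P.edgeSet : ℝ) - 1 < G.rho2 * ((t.ncard : ℝ) - 2)) := by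
  have hcardt : Nat.card ↥t = t.ncard := Nat.card_coe_set_eq t
  by_cases h2 : 2 ≤ Nat.card P.edgeSet
  · have h3 : 3 ≤ t.ncard := by
      by_contra h3
      have ht2' : t.ncard = 2 := by omega
      have hch := card_edgeSet_le_choose P
      rw [hcardt, ht2'] at hch
      simp only [Nat.choose_self] at hch
      simp only [Nat.card_coe_set_eq] at h2 hch
      omega
    obtain ⟨P', ⟨φ⟩⟩ := exists_iso_fin P
    have hproper : IsEmpty (P' ≃g G) := by
      constructor
      intro ψ
      have hcards : Nat.card ↥t = n := by
        have := Nat.card_congr ψ.toEquiv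
        simpa using this
      omega
    have hlt := hbal _ P' ⟨isMinor_of_iso φ hm, hproper⟩
    rw [rho2_congr φ, SimpleGraph.rho2, if_pos h2, hcardt] at hlt
    have hpos2 : (0:ℝ) < (t.ncard : ℝ) - 2 := by
      have : (3:ℝ) ≤ (t.ncard : ℝ) := by exact_mod_cast h3
      linarith
    rw [div_lt_iff₀ hpos2] at hlt
    exact ⟨le_of_lt (by linarith), fun _ => by linarith⟩
  · have hle : (Nat.card P.edgeSet : ℝ) - 1 ≤ 0 := by
      have h1 : Nat.card P.edgeSet ≤ 1 := by omega
      have : (Nat.card P.edgeSet : ℝ) ≤ 1 := by exact_mod_cast h1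
      linarith
    refine ⟨hle.trans (mul_nonneg hpos.le ?_), fun h3 => lt_of_le_of_lt hle (mul_pos hpos ?_)⟩
    · have : (2:ℝ) ≤ (t.ncard : ℝ) := by exact_mod_cast ht2
      linarith
    · have : (3:ℝ) ≤ (t.ncard : ℝ) := by exact_mod_cast h3
      linarith

lemma edges_counting (G : SimpleGraph (Fin n)) {s A B : Set (Fin n)}
    (hcov : A ∪ B ∪ s = Set.univ) (hAB : Disjoint A B)
    (hnoedge : ∀ u ∈ A, ∀ w ∈ B, ¬ G.Adj u w) :
    (edgesIn G (A ∪ s)).ncard + (edgesIn G (B ∪ s)).ncard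
      = Nat.card G.edgeSet + (edgesIn G s).ncard := by
  have hmemcov : ∀ u : Fin n, u ∈ A ∨ u ∈ B ∨ u ∈ s := by
    intro u
    have : u ∈ A ∪ B ∪ s := hcov ▸ Set.mem_univ u
    rcases this with (h | h) | h
    exacts [Or.inl h, Or.inr (Or.inl h), Or.inr (Or.inr h)]
  have hunion : edgesIn G (A ∪ s) ∪ edgesIn G (B ∪ s) = G.edgeSet := by
    apply Set.Subset.antisymm
    · rintro e (he | he) <;> exact he.1
    · intro e he
      induction e with
      | _ u w =>
        have hadj : G.Adj u w := he
        rcases hmemcov u with hu | hu | hu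
        · left
          refine mem_edgesIn.mpr ⟨hadj, Or.inl hu, ?_⟩
          rcases hmemcov w with hw | hw | hw
          · exact Or.inl hw
          · exact absurd hadj (hnoedge u hu w hw)
          · exact Or.inr hw
        · right
          refine mem_edgesIn.mpr ⟨hadj, Or.inl hu, ?_⟩
          rcases hmemcov w with hw | hw | hw
          · exact absurd hadj.symm (hnoedge w hw u hu)
          · exact Or.inl hw
          · exact Or.inr hw
        · rcases hmemcov w with hw | hw | hw
          · exact Or.inl (mem_edgesIn.mpr ⟨hadj, Or.inr hu, Or.inl hw⟩)
          · exact Or.inr (mem_edgesIn.mpr ⟨hadj, Or.inr hu, Or.inl hw⟩)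
          · exact Or.inl (mem_edgesIn.mpr ⟨hadj, Or.inr hu, Or.inr hw⟩)
  have hinter : edgesIn G (A ∪ s) ∩ edgesIn G (B ∪ s) = edgesIn G s := by
    have hmem : ∀ u : Fin n, u ∈ A ∪ s → u ∈ B ∪ s → u ∈ s := by
      rintro u (hu | hu) (hu' | hu')
      · exact absurd hu' (Set.disjoint_left.mp hAB hu)
      · exact hu'
      · exact hu
      · exact hu
    ext e
    induction e with
    | _ u w =>
      simp only [Set.mem_inter_iff, mem_edgesIn]
      constructor
      · rintro ⟨⟨ha, hu1, hw1⟩, ⟨_, hu2, hw2⟩⟩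
        exact ⟨ha, hmem u hu1 hu2, hmem w hw1 hw2⟩
      · rintro ⟨ha, hu, hw⟩
        exact ⟨⟨ha, Or.inr hu, Or.inr hw⟩, ⟨ha, Or.inr hu, Or.inr hw⟩⟩
  have := Set.ncard_union_add_ncard_inter (edgesIn G (A ∪ s)) (edgesIn G (B ∪ s))
    (Set.toFinite _) (Set.toFinite _)
  rw [hunion, hinter] at this
  have h4 : Nat.card ↑G.edgeSet = G.edgeSet.ncard := Nat.card_coe_set_eq _
  omega

lemma vert_counting {s A B : Set (Fin n)}
    (hcov : A ∪ B ∪ s = Set.univ) (hAB : Disjoint A B) (hsA : Disjoint s A)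
    (hsB : Disjoint s B) :
    (A ∪ s).ncard + (B ∪ s).ncard = n + s.ncard := by
  have h1 : (A ∪ s).ncard = A.ncard + s.ncard := Set.ncard_union_eq hsA.symm
  have h2 : (B ∪ s).ncard = B.ncard + s.ncard := Set.ncard_union_eq hsB.symm
  have h3 : (A ∪ B ∪ s).ncard = n := by
    rw [hcov, Set.ncard_univ]
    simp
  rw [Set.ncard_union_eq (by
      rw [Set.disjoint_union_left]
      exact ⟨hsA.symm, hsB.symm⟩),
    Set.ncard_union_eq hAB] at h3
  omega

lemma edgesIn_small (G : SimpleGraph (Fin n)) {s : Set (Fin n)} (h : s.ncard ≤ 1) :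
    edgesIn G s = ∅ := by
  ext e
  induction e with
  | _ u w =>
    simp only [Set.mem_empty_iff_false, iff_false, mem_edgesIn]
    rintro ⟨ha, hu, hw⟩
    exact ha.ne ((Set.ncard_le_one_iff (Set.toFinite _)).mp h hu hw)

lemma edgesIn_pair_of_not_adj (G : SimpleGraph (Fin n)) {x y : Fin n}
    (hnadj : ¬ G.Adj x y) : edgesIn G {x, y} = ∅ := by
  ext e
  induction e with
  | _ u w =>
    simp only [Set.mem_empty_iff_false, iff_false, mem_edgesIn, Set.mem_insert_iff,
      Set.mem_singleton_iff]
    rintro ⟨ha, (rfl | rfl), (rfl | rfl)⟩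
    · exact ha.ne rfl
    · exact hnadj ha
    · exact hnadj ha.symm
    · exact ha.ne rfl

lemma edgesIn_pair_of_adj (G : SimpleGraph (Fin n)) {x y : Fin n}
    (hadj : G.Adj x y) : edgesIn G {x, y} = {s(x, y)} := by
  ext e
  induction e with
  | _ u w =>
    simp only [Set.mem_singleton_iff, mem_edgesIn, Set.mem_insert_iff]
    constructor
    · rintro ⟨ha, (rfl | rfl), (rfl | rfl)⟩
      · exact absurd rfl ha.ne
      · rfl
      · exact Sym2.eq_swap
      · exact absurd rfl ha.ne
    · intro h
      rw [Sym2.eq_iff] at h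
      rcases h with ⟨rfl, rfl⟩ | ⟨rfl, rfl⟩
      · exact ⟨hadj, Or.inl rfl, Or.inr rfl⟩
      · exact ⟨hadj.symm, Or.inr rfl, Or.inl rfl⟩

lemma split {s : Set (Fin n)} (hne : sᶜ.Nonempty) (h : ¬ (G.induce sᶜ).Connected) :
    ∃ B : Set (Fin n), B ⊆ sᶜ ∧ B.Nonempty ∧ (sᶜ \ B).Nonempty ∧
      (G.induce B).Connected ∧ ∀ u ∈ sᶜ \ B, ∀ w ∈ B, ¬ G.Adj u w := by
  have hnon : Nonempty ↥sᶜ := hne.to_subtype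
  obtain ⟨b, a, hnr⟩ : ∃ b a : ↥sᶜ, ¬ (G.induce sᶜ).Reachable b a := by
    by_contra hc
    push_neg at hc
    exact h ⟨fun u v => hc u v⟩
  set B : Set (Fin n) := Subtype.val '' {w : ↥sᶜ | (G.induce sᶜ).Reachable b w} with hB
  have hBsub : B ⊆ sᶜ := by
    rintro x ⟨w, _, rfl⟩
    exact w.2
  have hbB : (b : Fin n) ∈ B := ⟨b, Reachable.refl _, rfl⟩
  have haB : (a : Fin n) ∈ sᶜ \ B := by
    refine ⟨a.2, ?_⟩
    rintro ⟨w, hw, hval⟩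
    have hwa : w = a := Subtype.ext hval
    exact hnr (hwa ▸ hw)
  have hnoedge : ∀ u ∈ sᶜ \ B, ∀ w ∈ B, ¬ G.Adj u w := by
    rintro u hu w ⟨w', hw', rfl⟩ hadj
    have hadj' : (G.induce sᶜ).Adj w' ⟨u, hu.1⟩ := by
      simp only [comap_adj, Function.Embedding.coe_subtype]
      exact hadj.symm
    exact hu.2 ⟨⟨u, hu.1⟩, hw'.trans hadj'.reachable, rfl⟩
  have hconn : (G.induce B).Connected := by
    apply G.induce_connected_of_patches (b : Fin n) hbB
    rintro v ⟨w, hw, rfl⟩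
    obtain ⟨p⟩ := hw
    let q := p.map (SimpleGraph.Embedding.induce sᶜ).toHom
    have hsupq : ∀ x, x ∈ q.support → x ∈ B := by
      intro x hx
      rw [Walk.support_map, List.mem_map] at hx
      obtain ⟨w', hw', rfl⟩ := hx
      exact ⟨w', ⟨p.takeUntil w' hw'⟩, rfl⟩
    refine ⟨{x | x ∈ q.support}, hsupq, q.start_mem_support, q.end_mem_support, ?_⟩
    exact (q.connected_induce_support).preconnected _ _
  exact ⟨B, hBsub, ⟨b, hbB⟩, ⟨a, haB⟩, hconn, hnoedge⟩

lemma handshake (hmin : ∀ u : Fin n, ∃ w, G.Adj u w) : n ≤ 2 * Nat.card G.edgeSet := by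
  classical
  letI : DecidableRel G.Adj := Classical.decRel _
  have hsum := G.sum_degrees_eq_twice_card_edges
  have hdeg : ∀ v, 1 ≤ G.degree v := fun v => (G.degree_pos_iff_exists_adj v).mpr (hmin v)
  have hle : n ≤ ∑ v, G.degree v := by
    calc n = ∑ _v : Fin n, 1 := by simp
    _ ≤ _ := Finset.sum_le_sum fun v _ => hdeg v
  rw [hsum] at hle
  rwa [Nat.card_eq_fintype_card, ← SimpleGraph.edgeFinset_card]

lemma conn_edges (hn : 5 ≤ n) (hconn : G.Connected) : n - 1 ≤ Nat.card G.edgeSet := by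
  classical
  have hr : Nonempty (Fin n) := ⟨⟨0, by omega⟩⟩
  obtain ⟨r⟩ := hr
  have hpar : ∀ v : Fin n, v ≠ r → ∃ w, G.Adj v w ∧ G.dist w r + 1 = G.dist v r := by
    intro v hv
    obtain ⟨p, hp⟩ := exists_walk_of_dist_ne_zero (Nat.pos_iff_ne_zero.mp (hconn.pos_dist_of_ne hv))
    have hnnil : ¬ p.Nil := Walk.not_nil_of_ne hv
    obtain ⟨w, hadj, q, rfl⟩ := Walk.not_nil_iff.mp hnnil
    refine ⟨w, hadj, ?_⟩
    have h1 : G.dist w r ≤ q.length := dist_le q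
    have h2 : G.dist v r ≤ 1 + G.dist w r := by
      calc G.dist v r ≤ G.dist v w + G.dist w r := hconn.dist_triangle
      _ ≤ 1 + G.dist w r := by
        have : G.dist v w ≤ 1 := by
          have := dist_le hadj.toWalk
          simpa using this
        omega
    have h3 : q.length + 1 = G.dist v r := by simpa using hp
    omega
  choose par hpadj hpdist using hpar
  have hinj : Function.Injective
      (fun v : {v : Fin n // v ≠ r} => (⟨s(v.1, par v.1 v.2), hpadj v.1 v.2⟩ : G.edgeSet)) := by
    rintro ⟨v₁, h₁⟩ ⟨v₂, h₂⟩ heq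
    simp only [Subtype.ext_iff, Sym2.eq_iff] at heq
    rcases heq with ⟨rfl, -⟩ | ⟨rfl, heq2⟩
    · rfl
    · exfalso
      have d1 := hpdist (par v₂ h₂) h₁
      have d2 := hpdist v₂ h₂
      rw [heq2] at d1
      omega
  have hcard : Nat.card {v : Fin n // v ≠ r} ≤ Nat.card G.edgeSet :=
    Nat.card_le_card_of_injective _ hinj
  have : Nat.card {v : Fin n // v ≠ r} = n - 1 := by
    rw [Nat.card_eq_fintype_card, Fintype.card_subtype_compl]
    simp
  omega

lemma mindeg (hn : 5 ≤ n) (hpos : 0 < G.rho2)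
    (hbal : ∀ (j : ℕ) (H : SimpleGraph (Fin j)), H.IsProperMinor G → H.rho2 < G.rho2)
    (u : Fin n) : ∃ w, G.Adj u w := by
  by_contra hiso
  push_neg at hiso
  have hN : Nat.card (Fin n) = n := by simp
  have htn : ({u}ᶜ : Set (Fin n)).ncard = n - 1 := by
    have h := Set.ncard_add_ncard_compl ({u} : Set (Fin n))
    rw [Set.ncard_singleton] at h
    omega
  have hst := piece_le hpos hbal (t := {u}ᶜ) (by omega) (by omega)
    (isMinor_induce G ({u}ᶜ : Set (Fin n)))
  have hedges : edgesIn G ({u}ᶜ : Set (Fin n)) = G.edgeSet := by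
    ext e
    induction e with
    | _ a b =>
      rw [mem_edgesIn]
      simp only [Set.mem_compl_iff, Set.mem_singleton_iff, SimpleGraph.mem_edgeSet]
      constructor
      · exact fun h => h.1
      · intro h
        refine ⟨h, ?_, ?_⟩
        · rintro rfl
          exact hiso b h
        · rintro rfl
          exact hiso a h.symm
  have hkey := hst.2 (by omega)
  rw [card_edgeSet_induce, hedges, ← Nat.card_coe_set_eq, htn] at hkey
  have hc : ((n - 1 : ℕ) : ℝ) = (n : ℝ) - 1 := by
    have : 1 ≤ n := by omega
    push_cast [this]
    ring
  rw [hc] at hkey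
  have hρ := rho_mul hn hpos
  have : G.rho2 * ((n : ℝ) - 1 - 2) = G.rho2 * ((n : ℝ) - 2) - G.rho2 := by ring
  linarith

lemma two_piece (hn : 5 ≤ n) (hpos : 0 < G.rho2)
    (hbal : ∀ (j : ℕ) (H : SimpleGraph (Fin j)), H.IsProperMinor G → H.rho2 < G.rho2)
    {s A B : Set (Fin n)} (hcov : A ∪ B ∪ s = Set.univ) (hAB : Disjoint A B)
    (hsA : Disjoint s A) (hsB : Disjoint s B)
    (hA2 : 2 ≤ (A ∪ s).ncard) (hB2 : 2 ≤ (B ∪ s).ncard)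
    (hA : A.Nonempty) (hB' : B.Nonempty)
    {PA : SimpleGraph ↥(A ∪ s)} (hPA : PA.IsMinor G) :
    ((Nat.card PA.edgeSet : ℝ) - 1) + (((edgesIn G (B ∪ s)).ncard : ℝ) - 1)
      < G.rho2 * (((A ∪ s).ncard : ℝ) - 2) + G.rho2 * (((B ∪ s).ncard : ℝ) - 2) := by
  have hvert := vert_counting hcov hAB hsA hsB
  have hAn : A.ncard ≥ 1 := (Set.ncard_pos (Set.toFinite _)).mpr hA
  have hBn : B.ncard ≥ 1 := (Set.ncard_pos (Set.toFinite _)).mpr hB'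
  have hAu : (A ∪ s).ncard = A.ncard + s.ncard := Set.ncard_union_eq hsA.symm
  have hBu : (B ∪ s).ncard = B.ncard + s.ncard := Set.ncard_union_eq hsB.symm
  have hAlt : (A ∪ s).ncard < n := by omega
  have hBlt : (B ∪ s).ncard < n := by omega
  have h3 : 3 ≤ (A ∪ s).ncard ∨ 3 ≤ (B ∪ s).ncard := by omega
  have bA := piece_le hpos hbal hAlt hA2 hPA
  have bB := piece_le hpos hbal hBlt hB2 (isMinor_induce G (B ∪ s))
  rw [card_edgeSet_induce] at bB
  rcases h3 with h3 | h3
  · exact add_lt_add_of_lt_of_le (bA.2 h3) bB.1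
  · exact add_lt_add_of_le_of_lt bA.1 (bB.2 h3)

end Main
end Stmt15Aux
section Steps
open SimpleGraph Set Stmt15Aux
namespace Stmt15Aux
variable {n : ℕ} {G : SimpleGraph (Fin n)}

lemma step_conn (hn : 5 ≤ n) (hpos : 0 < G.rho2)
    (hbal : ∀ (j : ℕ) (H : SimpleGraph (Fin j)), H.IsProperMinor G → H.rho2 < G.rho2) :
    (G.induce ((∅ : Set (Fin n))ᶜ)).Connected := by
  by_contra h
  have hne : ((∅ : Set (Fin n))ᶜ).Nonempty := ⟨⟨0, by omega⟩, by simp⟩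
  obtain ⟨B, hBsub, hBne, hAne, hBconn, hnoedge⟩ := split hne h
  set A : Set (Fin n) := (∅ : Set (Fin n))ᶜ \ B with hAdef
  have hcov : A ∪ B ∪ (∅ : Set (Fin n)) = Set.univ := by
    rw [Set.union_empty, hAdef, Set.diff_union_of_subset hBsub, Set.compl_empty]
  have hAB : Disjoint A B := Set.disjoint_sdiff_left
  have hsA : Disjoint (∅ : Set (Fin n)) A := Set.empty_disjoint A
  have hsB : Disjoint (∅ : Set (Fin n)) B := Set.empty_disjoint B
  have hmin := mindeg hn hpos hbal
  have hB2 : 2 ≤ (B ∪ (∅ : Set (Fin n))).ncard := by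
    rw [Set.union_empty]
    obtain ⟨b, hb⟩ := hBne
    obtain ⟨w, hw⟩ := hmin b
    have hwB : w ∈ B := by
      by_contra hwB
      exact hnoedge w ⟨by simp, hwB⟩ b hb hw.symm
    calc 2 = ({w, b} : Set (Fin n)).ncard := (Set.ncard_pair hw.ne').symm
    _ ≤ B.ncard := Set.ncard_le_ncard (by
        rintro z (rfl | rfl)
        exacts [hwB, hb]) (Set.toFinite _)
  have hA2 : 2 ≤ (A ∪ (∅ : Set (Fin n))).ncard := by
    rw [Set.union_empty]
    obtain ⟨a, ha⟩ := hAne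
    obtain ⟨w, hw⟩ := hmin a
    have hwA : w ∈ A := by
      refine ⟨by simp, fun hwB => hnoedge a ha w hwB hw⟩
    calc 2 = ({w, a} : Set (Fin n)).ncard := (Set.ncard_pair hw.ne').symm
    _ ≤ A.ncard := Set.ncard_le_ncard (by
        rintro z (rfl | rfl)
        exacts [hwA, ha]) (Set.toFinite _)
  have htp := two_piece hn hpos hbal hcov hAB hsA hsB hA2 hB2 hAne hBne
    (isMinor_induce G (A ∪ (∅ : Set (Fin n))))
  rw [card_edgeSet_induce] at htp
  have hcount := edges_counting G hcov hAB hnoedge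
  rw [edgesIn_small G (s := (∅ : Set (Fin n))) (by simp), Set.ncard_empty] at hcount
  have hvert := vert_counting hcov hAB hsA hsB
  rw [Set.ncard_empty] at hvert
  have hρ := rho_mul hn hpos
  have hhs := handshake hmin
  have hvert' : (A ∪ (∅ : Set (Fin n))).ncard + (B ∪ (∅ : Set (Fin n))).ncard = n := by omega
  have hab : ((A ∪ (∅ : Set (Fin n))).ncard : ℝ) + ((B ∪ (∅ : Set (Fin n))).ncard : ℝ) = n := by
    exact_mod_cast hvert'
  have hcount' : (edgesIn G (A ∪ (∅ : Set (Fin n)))).ncard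
      + (edgesIn G (B ∪ (∅ : Set (Fin n)))).ncard = Nat.card G.edgeSet := by omega
  have heab : ((edgesIn G (A ∪ (∅ : Set (Fin n)))).ncard : ℝ)
      + ((edgesIn G (B ∪ (∅ : Set (Fin n)))).ncard : ℝ) = (Nat.card G.edgeSet : ℝ) := by
    exact_mod_cast hcount'
  have hrhs : G.rho2 * (((A ∪ (∅ : Set (Fin n))).ncard : ℝ) - 2)
      + G.rho2 * (((B ∪ (∅ : Set (Fin n))).ncard : ℝ) - 2)
      = G.rho2 * ((n : ℝ) - 2) - 2 * G.rho2 := by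
    linear_combination G.rho2 * hab
  have hn2 : (0:ℝ) < (n:ℝ) - 2 := by
    have : (5:ℝ) ≤ (n:ℝ) := by exact_mod_cast hn
    linarith
  have h2e : (n:ℝ) ≤ 2 * (Nat.card G.edgeSet : ℝ) := by exact_mod_cast hhs
  have hhalf : 1 ≤ 2 * G.rho2 := by nlinarith [hρ, h2e, hn2]
  linarith [htp, hrhs, hρ, heab, hhalf]

lemma G_connected (hn : 5 ≤ n) (hpos : 0 < G.rho2)
    (hbal : ∀ (j : ℕ) (H : SimpleGraph (Fin j)), H.IsProperMinor G → H.rho2 < G.rho2) :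
    G.Connected := by
  have h0 := step_conn hn hpos hbal
  rw [Set.compl_empty] at h0
  exact G.induceUnivIso.connected_iff.mp h0

lemma step_one (hn : 5 ≤ n) (hpos : 0 < G.rho2)
    (hbal : ∀ (j : ℕ) (H : SimpleGraph (Fin j)), H.IsProperMinor G → H.rho2 < G.rho2)
    (x : Fin n) : (G.induce (({x} : Set (Fin n))ᶜ)).Connected := by
  by_contra h
  have hN : Nat.card (Fin n) = n := by simp
  have hcompl : (({x} : Set (Fin n))ᶜ).ncard = n - 1 := by
    have h := Set.ncard_add_ncard_compl ({x} : Set (Fin n))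
    rw [Set.ncard_singleton] at h
    omega
  have hne : (({x} : Set (Fin n))ᶜ).Nonempty := by
    rw [← Set.ncard_pos (Set.toFinite _), hcompl]
    omega
  obtain ⟨B, hBsub, hBne, hAne, hBconn, hnoedge⟩ := split hne h
  set A : Set (Fin n) := ({x} : Set (Fin n))ᶜ \ B with hAdef
  have hcov : A ∪ B ∪ ({x} : Set (Fin n)) = Set.univ := by
    rw [hAdef, Set.diff_union_of_subset hBsub, Set.compl_union_self]
  have hAB : Disjoint A B := Set.disjoint_sdiff_left
  have hsA : Disjoint ({x} : Set (Fin n)) A := by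
    rw [Set.disjoint_left]
    rintro z rfl hz
    exact hz.1 rfl
  have hsB : Disjoint ({x} : Set (Fin n)) B := by
    rw [Set.disjoint_left]
    rintro z rfl hz
    exact (hBsub hz) rfl
  have hA2 : 2 ≤ (A ∪ ({x} : Set (Fin n))).ncard := by
    rw [Set.ncard_union_eq hsA.symm, Set.ncard_singleton]
    have := (Set.ncard_pos (Set.toFinite _)).mpr hAne
    omega
  have hB2 : 2 ≤ (B ∪ ({x} : Set (Fin n))).ncard := by
    rw [Set.ncard_union_eq hsB.symm, Set.ncard_singleton]
    have := (Set.ncard_pos (Set.toFinite _)).mpr hBne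
    omega
  have htp := two_piece hn hpos hbal hcov hAB hsA hsB hA2 hB2 hAne hBne
    (isMinor_induce G (A ∪ ({x} : Set (Fin n))))
  rw [card_edgeSet_induce] at htp
  have hcount := edges_counting G hcov hAB hnoedge
  rw [edgesIn_small G (s := ({x} : Set (Fin n))) (by simp), Set.ncard_empty] at hcount
  have hvert := vert_counting hcov hAB hsA hsB
  rw [Set.ncard_singleton] at hvert
  have hρ := rho_mul hn hpos
  have hce := conn_edges hn (G_connected hn hpos hbal)
  have hab : ((A ∪ ({x} : Set (Fin n))).ncard : ℝ)
      + ((B ∪ ({x} : Set (Fin n))).ncard : ℝ) = (n : ℝ) + 1 := by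
    exact_mod_cast hvert
  have hcount' : (edgesIn G (A ∪ ({x} : Set (Fin n)))).ncard
      + (edgesIn G (B ∪ ({x} : Set (Fin n)))).ncard = Nat.card G.edgeSet := by omega
  have heab : ((edgesIn G (A ∪ ({x} : Set (Fin n)))).ncard : ℝ)
      + ((edgesIn G (B ∪ ({x} : Set (Fin n)))).ncard : ℝ) = (Nat.card G.edgeSet : ℝ) := by
    exact_mod_cast hcount'
  have hrhs : G.rho2 * (((A ∪ ({x} : Set (Fin n))).ncard : ℝ) - 2)
      + G.rho2 * (((B ∪ ({x} : Set (Fin n))).ncard : ℝ) - 2)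
      = G.rho2 * ((n : ℝ) - 2) - G.rho2 := by
    linear_combination G.rho2 * hab
  have hn2 : (0:ℝ) < (n:ℝ) - 2 := by
    have : (5:ℝ) ≤ (n:ℝ) := by exact_mod_cast hn
    linarith
  have hce' : (n:ℝ) - 1 ≤ (Nat.card G.edgeSet : ℝ) := by
    have h1 : ((n - 1 : ℕ) : ℝ) ≤ (Nat.card G.edgeSet : ℝ) := by exact_mod_cast hce
    have h2 : ((n - 1 : ℕ) : ℝ) = (n : ℝ) - 1 := by
      have : 1 ≤ n := by omega
      push_cast [this]
      ring
    linarith [h2 ▸ h1]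
  have hone : 1 ≤ G.rho2 := by nlinarith [hρ, hce', hn2]
  linarith [htp, hrhs, hρ, heab, hone]

lemma cut_adj (hD : ∀ z : Fin n, (G.induce (({z} : Set (Fin n))ᶜ)).Connected)
    {x y : Fin n} (hxy : x ≠ y) {B : Set (Fin n)} (hBsub : B ⊆ ({x, y} : Set (Fin n))ᶜ)
    (hBne : B.Nonempty) (hAne : (({x, y} : Set (Fin n))ᶜ \ B).Nonempty)
    (hnoedge : ∀ u ∈ ({x, y} : Set (Fin n))ᶜ \ B, ∀ w ∈ B, ¬ G.Adj u w) :
    ∃ b ∈ B, G.Adj y b := by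
  by_contra hy
  push_neg at hy
  obtain ⟨b, hb⟩ := hBne
  obtain ⟨a, ha⟩ := hAne
  have hbmem : ∀ z ∈ ({x, y} : Set (Fin n))ᶜ, z ∈ (({x} : Set (Fin n))ᶜ) := by
    intro z hz
    simp only [Set.mem_compl_iff, Set.mem_insert_iff, Set.mem_singleton_iff] at hz ⊢
    exact fun h => hz (Or.inl h)
  have hbx : b ∈ (({x} : Set (Fin n))ᶜ) := hbmem b (hBsub hb)
  have hax : a ∈ (({x} : Set (Fin n))ᶜ) := hbmem a ha.1
  obtain ⟨p⟩ := (hD x).preconnected ⟨b, hbx⟩ ⟨a, hax⟩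
  have hbS : (⟨b, hbx⟩ : ↥(({x} : Set (Fin n))ᶜ)) ∈ {w : ↥(({x} : Set (Fin n))ᶜ) | (w : Fin n) ∈ B} := hb
  have haS : (⟨a, hax⟩ : ↥(({x} : Set (Fin n))ᶜ)) ∉ {w : ↥(({x} : Set (Fin n))ᶜ) | (w : Fin n) ∈ B} := ha.2
  obtain ⟨d, hd, hdf, hds⟩ := p.exists_boundary_dart _ hbS haS
  have hadjG : G.Adj (d.fst : Fin n) (d.snd : Fin n) := d.adj
  have hsndx : (d.snd : Fin n) ∈ (({x} : Set (Fin n))ᶜ) := d.snd.2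
  by_cases hsy : (d.snd : Fin n) = y
  · exact hy (d.fst : Fin n) hdf (hsy ▸ hadjG.symm)
  · have hsndA : (d.snd : Fin n) ∈ ({x, y} : Set (Fin n))ᶜ \ B := by
      refine ⟨?_, hds⟩
      simp only [Set.mem_compl_iff, Set.mem_insert_iff, Set.mem_singleton_iff]
      rintro (h | h)
      · exact hsndx h
      · exact hsy h
    exact hnoedge _ hsndA _ hdf hadjG.symm

end Stmt15Aux
end Steps
namespace Stmt15Aux
open SimpleGraph Set
variable {n : ℕ} {G : SimpleGraph (Fin n)}

lemma step_two (hn : 5 ≤ n) (hpos : 0 < G.rho2)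
    (hbal : ∀ (j : ℕ) (H : SimpleGraph (Fin j)), H.IsProperMinor G → H.rho2 < G.rho2)
    {x y : Fin n} (hxy : x ≠ y) :
    (G.induce (({x, y} : Set (Fin n))ᶜ)).Connected := by
  by_contra h
  have hN : Nat.card (Fin n) = n := by simp
  have hpair : ({x, y} : Set (Fin n)).ncard = 2 := Set.ncard_pair hxy
  have hcompl : (({x, y} : Set (Fin n))ᶜ).ncard = n - 2 := by
    have h := Set.ncard_add_ncard_compl ({x, y} : Set (Fin n))
    omega
  have hne : (({x, y} : Set (Fin n))ᶜ).Nonempty := by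
    rw [← Set.ncard_pos (Set.toFinite _), hcompl]
    omega
  obtain ⟨B, hBsub, hBne, hAne, hBconn, hnoedge⟩ := split hne h
  set A : Set (Fin n) := ({x, y} : Set (Fin n))ᶜ \ B with hAdef
  have hcov : A ∪ B ∪ ({x, y} : Set (Fin n)) = Set.univ := by
    rw [hAdef, Set.diff_union_of_subset hBsub, Set.compl_union_self]
  have hAB : Disjoint A B := Set.disjoint_sdiff_left
  have hsA : Disjoint ({x, y} : Set (Fin n)) A := by
    rw [Set.disjoint_left]
    intro z hz hzA
    exact hzA.1 hz
  have hsB : Disjoint ({x, y} : Set (Fin n)) B := by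
    rw [Set.disjoint_left]
    intro z hz hzB
    exact (hBsub hzB) hz
  have hA2 : 2 ≤ (A ∪ ({x, y} : Set (Fin n))).ncard := by
    rw [Set.ncard_union_eq hsA.symm, hpair]
    omega
  have hB2 : 2 ≤ (B ∪ ({x, y} : Set (Fin n))).ncard := by
    rw [Set.ncard_union_eq hsB.symm, hpair]
    omega
  have hD := step_one hn hpos hbal
  have hyB : ∃ b ∈ B, G.Adj y b := cut_adj hD hxy hBsub hBne hAne hnoedge
  have hxB : ∃ b ∈ B, G.Adj x b := by
    refine cut_adj hD hxy.symm (B := B) ?_ hBne ?_ ?_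
    · rw [Set.pair_comm y x]
      exact hBsub
    · rw [Set.pair_comm y x]
      exact hAne
    · rw [Set.pair_comm y x]
      exact hnoedge
  have hvert := vert_counting hcov hAB hsA hsB
  rw [hpair] at hvert
  have hcount := edges_counting G hcov hAB hnoedge
  have hρ := rho_mul hn hpos
  have hab : ((A ∪ ({x, y} : Set (Fin n))).ncard : ℝ)
      + ((B ∪ ({x, y} : Set (Fin n))).ncard : ℝ) = (n : ℝ) + 2 := by
    exact_mod_cast hvert
  have hrhs : G.rho2 * (((A ∪ ({x, y} : Set (Fin n))).ncard : ℝ) - 2)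
      + G.rho2 * (((B ∪ ({x, y} : Set (Fin n))).ncard : ℝ) - 2)
      = G.rho2 * ((n : ℝ) - 2) := by
    linear_combination G.rho2 * hab
  by_cases hadj : G.Adj x y
  · have htp := two_piece hn hpos hbal hcov hAB hsA hsB hA2 hB2 hAne hBne
      (isMinor_induce G (A ∪ ({x, y} : Set (Fin n))))
    rw [card_edgeSet_induce] at htp
    rw [edgesIn_pair_of_adj G hadj, Set.ncard_singleton] at hcount
    have heab : ((edgesIn G (A ∪ ({x, y} : Set (Fin n)))).ncard : ℝ)
        + ((edgesIn G (B ∪ ({x, y} : Set (Fin n)))).ncard : ℝ)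
        = (Nat.card G.edgeSet : ℝ) + 1 := by
      exact_mod_cast hcount
    linarith [htp, hrhs, hρ, heab]
  · set t : Set (Fin n) := A ∪ ({x, y} : Set (Fin n)) with htdef
    have hxt : x ∈ t := Or.inr (Or.inl rfl)
    have hyt : y ∈ t := Or.inr (Or.inr rfl)
    have hdisjtB : Disjoint t B := by
      rw [htdef, Set.disjoint_union_left]
      exact ⟨hAB, hsB⟩
    obtain ⟨b0, hb0, hyb0⟩ := hyB
    have hconn' : (G.induce (insert y B)).Connected := by
      have hu := SimpleGraph.connected_induce_union (G := G) (s := {y}) (t := B)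
        (induce_singleton_connected G y).preconnected hBconn.preconnected rfl hb0 hyb0
      rwa [Set.singleton_union] at hu
    obtain ⟨b1, hb1, hxb1⟩ := hxB
    have hxB' : ∃ b ∈ insert y B, G.Adj x b := ⟨b1, Set.mem_insert_of_mem _ hb1, hxb1⟩
    have hminor := isMinor_induce_sup_edge G hxt hyt hxy hdisjtB hconn' hxB'
    have hsne : (⟨x, hxt⟩ : ↥t) ≠ ⟨y, hyt⟩ := fun hh => hxy (congrArg Subtype.val hh)
    have hnadj' : ¬ (G.induce t).Adj ⟨x, hxt⟩ ⟨y, hyt⟩ := fun hc => hadj hc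
    have hPAcard : Nat.card ((G.induce t) ⊔ SimpleGraph.edge
        (⟨x, hxt⟩ : ↥t) (⟨y, hyt⟩ : ↥t)).edgeSet = (edgesIn G t).ncard + 1 := by
      rw [card_edgeSet_sup_edge _ hsne hnadj', card_edgeSet_induce]
    have htp := two_piece hn hpos hbal hcov hAB hsA hsB hA2 hB2 hAne hBne hminor
    have hPAcard' : (Nat.card ((G.induce t) ⊔ SimpleGraph.edge
        (⟨x, hxt⟩ : ↥t) (⟨y, hyt⟩ : ↥t)).edgeSet : ℝ) = ((edgesIn G t).ncard : ℝ) + 1 := by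
      exact_mod_cast hPAcard
    rw [hPAcard'] at htp
    rw [edgesIn_pair_of_not_adj G hadj, Set.ncard_empty] at hcount
    have heab : ((edgesIn G (A ∪ ({x, y} : Set (Fin n)))).ncard : ℝ)
        + ((edgesIn G (B ∪ ({x, y} : Set (Fin n)))).ncard : ℝ)
        = (Nat.card G.edgeSet : ℝ) := by
      exact_mod_cast hcount
    linarith [htp, hrhs, hρ, heab]

end Stmt15Aux

/-- a strictly 2-minor-balanced graph on `v ≥ 5` vertices is 3-connected:
it has at least 4 vertices and deleting any at most 2 vertices leaves it connected. -/
theorem stmt15 {n : ℕ} (hn : 5 ≤ n) (G : SimpleGraph (Fin n))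
    (hpos : 0 < G.rho2)
    (hbal : ∀ (j : ℕ) (H : SimpleGraph (Fin j)), H.IsProperMinor G → H.rho2 < G.rho2) :
    4 ≤ n ∧ ∀ s : Set (Fin n), s.ncard ≤ 2 → (G.induce sᶜ).Connected := by
  refine ⟨by omega, fun s hs => ?_⟩
  obtain h0 | h1 | h2 : s.ncard = 0 ∨ s.ncard = 1 ∨ s.ncard = 2 := by omega
  · rw [(Set.ncard_eq_zero (Set.toFinite s)).mp h0]
    exact Stmt15Aux.step_conn hn hpos hbal
  · obtain ⟨x, rfl⟩ := Set.ncard_eq_one.mp h1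
    exact Stmt15Aux.step_one hn hpos hbal x
  · obtain ⟨x, y, hxy, rfl⟩ := Set.ncard_eq_two.mp h2
    exact Stmt15Aux.step_two hn hpos hbal hxy
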